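/- Let G be a finite simple graph and u, w two adjacent vertices such that u is cheap in G, u is the only cheap vertex of G adjacent to w, and w is cheap in G − u. Then S = {u, w} is a 1-cheap set: Σ_{v ∈ N[S]} 1/(ζ(v) + 1/2) ≤ 2 and the induced subgraph on S has maximum degree at most 1. -/

import Mathlib

open SimpleGraph Finset

/-- The minimum degree of a subgraph `H` of `G`: the infimum over vertices of `H`
of the number of neighbors in `H`. -/
noncomputable def subMinDeg {V : Type*} (G : SimpleGraph V) (H : G.Subgraph) : ℕ :=
  sInf ((fun v => (H.neighborSet v).ncard) '' H.verts)

/-- The degenerate degree `ζ(v)`: the maximum of `δ(H)` over all subgraphs `H` of `G`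
containing `v`. -/
noncomputable def zeta {V : Type*} (G : SimpleGraph V) (v : V) : ℕ :=
  sSup {n | ∃ H : G.Subgraph, v ∈ H.verts ∧ subMinDeg G H = n}

/-- A vertex `u` is cheap if `ζ(u) = deg_G(u)` and `ζ(u) ≤ ζ(w)` for every `w ∈ N[u]`. -/
def Cheap {V : Type*} (G : SimpleGraph V) (u : V) : Prop :=
  zeta G u = (G.neighborSet u).ncard ∧ ∀ w, G.Adj u w → zeta G u ≤ zeta G w

section Aux

variable {V W : Type*} {G : SimpleGraph V} {G₂ : SimpleGraph W}

lemma map_neighborSet_emb (f : G ↪g G₂) (H : G.Subgraph) (a : V) :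
    (H.map f.toHom).neighborSet (f.toHom a) = f.toHom '' H.neighborSet a := by
  ext y
  simp only [Subgraph.mem_neighborSet, Subgraph.map_adj, Relation.Map, Set.mem_image]
  constructor
  · rintro ⟨p, q, h, hp, rfl⟩
    have hpa : p = a := f.injective hp
    exact ⟨q, by rwa [hpa] at h, rfl⟩
  · rintro ⟨q, hq, rfl⟩
    exact ⟨a, q, hq, rfl, rfl⟩

lemma subMinDeg_map_emb (f : G ↪g G₂) (H : G.Subgraph) :
    subMinDeg G₂ (H.map f.toHom) = subMinDeg G H := by
  unfold subMinDeg
  congr 1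
  rw [Subgraph.map_verts, Set.image_image]
  apply Set.image_congr
  intro a _
  rw [map_neighborSet_emb]
  exact Set.ncard_image_of_injective _ f.injective

lemma zero_mem_zetaSet (G : SimpleGraph V) (v : V) :
    0 ∈ {n | ∃ H : G.Subgraph, v ∈ H.verts ∧ subMinDeg G H = n} := by
  refine ⟨G.singletonSubgraph v, Set.mem_singleton v, ?_⟩
  have hns : ∀ x, (G.singletonSubgraph v).neighborSet x = ∅ := by
    intro x
    ext y
    simp [Subgraph.mem_neighborSet, singletonSubgraph_adj, Pi.bot_apply]
  unfold subMinDeg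
  have : ((fun x => ((G.singletonSubgraph v).neighborSet x).ncard) ''
      (G.singletonSubgraph v).verts) = {0} := by
    rw [singletonSubgraph_verts, Set.image_singleton, hns, Set.ncard_empty]
  rw [this]
  simp

lemma zetaSet_bddAbove [Fintype V] (G : SimpleGraph V) (v : V) :
    BddAbove {n | ∃ H : G.Subgraph, v ∈ H.verts ∧ subMinDeg G H = n} := by
  refine ⟨Fintype.card V, ?_⟩
  rintro n ⟨H, hv, rfl⟩
  calc subMinDeg G H ≤ (H.neighborSet v).ncard := Nat.sInf_le ⟨v, hv, rfl⟩
    _ ≤ Fintype.card V := by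
        have h := Set.ncard_le_ncard (Set.subset_univ (H.neighborSet v)) Set.finite_univ
        rwa [Set.ncard_univ, Nat.card_eq_fintype_card] at h

lemma le_zeta [Fintype V] (G : SimpleGraph V) {v : V} {n : ℕ}
    (h : ∃ H : G.Subgraph, v ∈ H.verts ∧ subMinDeg G H = n) : n ≤ zeta G v :=
  le_csSup (zetaSet_bddAbove G v) h

lemma zeta_induce_le [Fintype V] (G : SimpleGraph V) (s : Set V) (x : s) :
    zeta (G.induce s) x ≤ zeta G (x : V) := by
  apply csSup_le ⟨0, zero_mem_zetaSet _ _⟩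
  rintro n ⟨H, hx, rfl⟩
  refine le_zeta G ⟨H.map (SimpleGraph.Embedding.induce s).toHom, ⟨x, hx, rfl⟩, ?_⟩
  exact subMinDeg_map_emb _ _

lemma term_mono {a b : ℕ} (h : a ≤ b) : (1 : ℝ) / ((b : ℝ) + 1/2) ≤ 1 / ((a : ℝ) + 1/2) := by
  have hab : (a : ℝ) ≤ b := Nat.cast_le.mpr h
  apply one_div_le_one_div_of_le
  · positivity
  · linarith

end Aux

theorem stmt_10 {V : Type*} [Fintype V] [DecidableEq V] (G : SimpleGraph V)
    [DecidableRel G.Adj] (u w : V) (huw : G.Adj u w)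
    (hu : Cheap G u)
    (honly : ∀ x : V, Cheap G x → G.Adj x w → x = u)
    (hw : Cheap (G.induce {x : V | x ≠ u}) ⟨w, (G.ne_of_adj huw).symm⟩) :
    (∑ v ∈ Finset.univ.filter
        (fun v => v = u ∨ v = w ∨ G.Adj u v ∨ G.Adj w v),
      (1 : ℝ) / (zeta G v + 1/2)) ≤ 2 ∧
    (∀ v ∈ ({u, w} : Finset V), (({u, w} : Finset V).filter (G.Adj v)).card ≤ 1) := by
  classical
  have hne : u ≠ w := G.ne_of_adj huw
  constructor
  · -- the sum bound
    set f : V → ℝ := fun v => (1 : ℝ) / (zeta G v + 1/2) with hf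
    set d : ℕ := zeta G u with hdd
    set e : ℕ := (G.neighborSet w).ncard with hee
    have hncard : ∀ x : V, (G.neighborSet x).ncard = (G.neighborFinset x).card := by
      intro x
      simp [neighborFinset_def, Set.ncard_eq_toFinset_card']
    have hdeg_u : (G.neighborFinset u).card = d := by
      rw [← hncard, ← hu.1]
    have hdeg_w : (G.neighborFinset w).card = e := by rw [← hncard]
    have hd1 : 1 ≤ d := by
      rw [← hdeg_u]
      exact Finset.card_pos.mpr ⟨w, (mem_neighborFinset G u w).mpr huw⟩
    have he1 : 1 ≤ e := by
      rw [← hdeg_w]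
      exact Finset.card_pos.mpr ⟨u, (mem_neighborFinset G w u).mpr huw.symm⟩
    -- the degree of w in G - u is e - 1
    set s : Set V := {x : V | x ≠ u} with hs
    set w' : s := ⟨w, (G.ne_of_adj huw).symm⟩ with hw'
    have hdegw' : ((G.induce s).neighborSet w').ncard = e - 1 := by
      have himg : Subtype.val '' ((G.induce s).neighborSet w') = G.neighborSet w \ {u} := by
        ext x
        constructor
        · rintro ⟨⟨y, hy⟩, hadj, rfl⟩
          exact ⟨hadj, hy⟩
        · rintro ⟨hadj, hx⟩
          exact ⟨⟨x, hx⟩, hadj, rfl⟩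
      have := Set.ncard_image_of_injective ((G.induce s).neighborSet w') Subtype.val_injective
      rw [himg] at this
      rw [← this, Set.ncard_diff_singleton_of_mem (by exact huw.symm : u ∈ G.neighborSet w)]
    -- key zeta lower bounds
    have hzw_d : d ≤ zeta G w := hu.2 w huw
    have h1 : zeta (G.induce s) w' = e - 1 := by rw [hw.1, hdegw']
    have hzw_e : e - 1 ≤ zeta G w := by
      calc e - 1 = zeta (G.induce s) w' := h1.symm
        _ ≤ zeta G w := zeta_induce_le G s w'
    have hzeta_e : ∀ x : V, x ≠ u → G.Adj w x → e - 1 ≤ zeta G x := by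
      intro x hxu hadj
      by_cases hxw : x = w
      · rw [hxw]; exact hzw_e
      · have hadj' : (G.induce s).Adj w' ⟨x, hxu⟩ := hadj
        calc e - 1 = zeta (G.induce s) w' := h1.symm
          _ ≤ zeta (G.induce s) ⟨x, hxu⟩ := hw.2 _ hadj'
          _ ≤ zeta G x := zeta_induce_le G s ⟨x, hxu⟩
    -- split the summation set
    set A : Finset V := insert u (G.neighborFinset u) with hA
    set B : Finset V := G.neighborFinset w \ A with hB
    have hT : Finset.univ.filter (fun v => v = u ∨ v = w ∨ G.Adj u v ∨ G.Adj w v) = A ∪ B := by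
      ext v
      simp only [mem_filter, mem_univ, true_and, mem_union, hA, hB, mem_insert,
        mem_neighborFinset, mem_sdiff]
      constructor
      · rintro (rfl | rfl | h | h)
        · exact Or.inl (Or.inl rfl)
        · exact Or.inl (Or.inr huw)
        · exact Or.inl (Or.inr h)
        · by_cases hA' : v = u ∨ G.Adj u v
          · exact Or.inl hA'
          · exact Or.inr ⟨h, hA'⟩
      · rintro ((rfl | h) | ⟨h, -⟩)
        · exact Or.inl rfl
        · exact Or.inr (Or.inr (Or.inl h))
        · exact Or.inr (Or.inr (Or.inr h))
    have hdisj : Disjoint A B := Finset.disjoint_sdiff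
    have huA : u ∉ G.neighborFinset u := by
      simp [mem_neighborFinset]
    have hwmem : w ∈ G.neighborFinset u := (mem_neighborFinset G u w).mpr huw
    -- bounds for the pieces
    have hfu : f u = 1 / ((d : ℝ) + 1/2) := rfl
    have hfnbr : ∀ x ∈ (G.neighborFinset u).erase w, f x ≤ 1 / ((d : ℝ) + 1/2) := by
      intro x hx
      exact term_mono (hu.2 x ((mem_neighborFinset G u x).mp (Finset.mem_of_mem_erase hx)))
    have hsum_erase : ∑ x ∈ (G.neighborFinset u).erase w, f x
        ≤ (((d : ℝ) - 1)) * (1 / ((d : ℝ) + 1/2)) := by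
      have h := Finset.sum_le_card_nsmul _ f _ hfnbr
      rw [Finset.card_erase_of_mem hwmem, hdeg_u, nsmul_eq_mul] at h
      rwa [Nat.cast_sub hd1, Nat.cast_one] at h
    have hBsub : B ⊆ (G.neighborFinset w).erase u := by
      intro x hx
      rw [hB, mem_sdiff] at hx
      refine Finset.mem_erase.mpr ⟨?_, hx.1⟩
      intro hxu
      exact hx.2 (by rw [hxu, hA]; exact Finset.mem_insert_self u _)
    have hcardB : (B.card : ℝ) ≤ (e : ℝ) - 1 := by
      have h1 : B.card ≤ e - 1 := by
        calc B.card ≤ ((G.neighborFinset w).erase u).card := Finset.card_le_card hBsub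
          _ = e - 1 := by rw [Finset.card_erase_of_mem
              ((mem_neighborFinset G w u).mpr huw.symm), hdeg_w]
      calc (B.card : ℝ) ≤ ((e - 1 : ℕ) : ℝ) := Nat.cast_le.mpr h1
        _ = (e : ℝ) - 1 := by rw [Nat.cast_sub he1, Nat.cast_one]
    have hfB : ∀ x ∈ B, f x ≤ 1 / (((e - 1 : ℕ) : ℝ) + 1/2) := by
      intro x hx
      rw [hB, mem_sdiff] at hx
      have hxu : x ≠ u := by
        intro hxu
        exact hx.2 (by rw [hxu, hA]; exact Finset.mem_insert_self u _)
      exact term_mono (hzeta_e x hxu ((mem_neighborFinset G w x).mp hx.1))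
    have hee1 : ((e - 1 : ℕ) : ℝ) = (e : ℝ) - 1 := by rw [Nat.cast_sub he1, Nat.cast_one]
    have hsumB : ∑ x ∈ B, f x ≤ ((e : ℝ) - 1) * (1 / ((e : ℝ) - 1 + 1/2)) := by
      have h := Finset.sum_le_card_nsmul _ f _ hfB
      rw [nsmul_eq_mul, hee1] at h
      have h1e : (1 : ℝ) ≤ (e : ℝ) := by exact_mod_cast he1
      have hpos : (0 : ℝ) ≤ 1 / ((e : ℝ) - 1 + 1/2) :=
        le_of_lt (div_pos one_pos (by linarith))
      calc ∑ x ∈ B, f x ≤ (B.card : ℝ) * (1 / ((e : ℝ) - 1 + 1/2)) := h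
        _ ≤ ((e : ℝ) - 1) * (1 / ((e : ℝ) - 1 + 1/2)) := by
            apply mul_le_mul_of_nonneg_right hcardB hpos
    -- assemble
    rw [hT, Finset.sum_union hdisj, hA, Finset.sum_insert huA,
      ← Finset.add_sum_erase _ f hwmem]
    set D : ℝ := (d : ℝ) with hD
    set E : ℝ := (e : ℝ) with hE
    have hD1 : (1 : ℝ) ≤ D := by rw [hD]; exact_mod_cast hd1
    have hE1 : (1 : ℝ) ≤ E := by rw [hE]; exact_mod_cast he1
    have hp1 : (0 : ℝ) < D + 1/2 := by linarith
    have hp2 : (0 : ℝ) < E - 1/2 := by linarith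
    set a : ℝ := 1 / (D + 1/2) with ha
    set b : ℝ := 1 / (E - 1/2) with hb
    have haD : a * (D + 1/2) = 1 := by rw [ha]; exact one_div_mul_cancel hp1.ne'
    have hbE : b * (E - 1/2) = 1 := by rw [hb]; exact one_div_mul_cancel hp2.ne'
    have ha0 : 0 < a := by rw [ha]; exact div_pos one_pos hp1
    have hb0 : 0 < b := by rw [hb]; exact div_pos one_pos hp2
    have hEb : (E - 1) * (1 / (E - 1 + 1/2)) = (E - 1) * b := by
      rw [hb]; ring_nf
    rcases le_or_gt e (d + 1) with hcase | hcase
    · -- e ≤ d + 1 : bound f w by a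
      have hfw : f w ≤ a := term_mono hzw_d
      have hab : a ≤ b := by
        rw [ha, hb]
        apply one_div_le_one_div_of_le hp2
        have : E ≤ D + 1 := by
          rw [hD, hE]
          exact_mod_cast hcase
        linarith
      calc f u + (f w + ∑ x ∈ (G.neighborFinset u).erase w, f x) + ∑ x ∈ B, f x
          ≤ a + (a + (D - 1) * a) + (E - 1) * (1 / (E - 1 + 1/2)) := by
            apply add_le_add (add_le_add le_rfl (add_le_add hfw hsum_erase)) hsumB
        _ = (D + 1) * a + (E - 1) * b := by rw [hEb]; ring
        _ ≤ 2 := by nlinarith [haD, hbE, hab]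
    · -- e ≥ d + 2 : bound f w by b
      have hfw : f w ≤ b := by
        have h := term_mono hzw_e
        rw [hee1, show E - 1 + 1/2 = E - 1/2 by ring] at h
        rw [hb]
        exact h
      have hba : b ≤ a := by
        rw [ha, hb]
        apply one_div_le_one_div_of_le hp1
        have : D + 2 ≤ E := by
          rw [hD, hE]
          exact_mod_cast hcase
        linarith
      calc f u + (f w + ∑ x ∈ (G.neighborFinset u).erase w, f x) + ∑ x ∈ B, f x
          ≤ a + (b + (D - 1) * a) + (E - 1) * (1 / (E - 1 + 1/2)) := by
            apply add_le_add (add_le_add le_rfl (add_le_add hfw hsum_erase)) hsumB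
        _ = D * a + E * b := by rw [hEb]; ring
        _ ≤ 2 := by nlinarith [haD, hbE, hba]
  · -- max degree at most 1
    intro v hv
    simp only [Finset.mem_insert, Finset.mem_singleton] at hv
    rcases hv with rfl | rfl
    · calc (({v, w} : Finset V).filter (G.Adj v)).card ≤ ({w} : Finset V).card := by
            apply Finset.card_le_card
            intro x hx
            rw [Finset.mem_filter, Finset.mem_insert, Finset.mem_singleton] at hx
            rcases hx.1 with rfl | rfl
            · exact absurd hx.2 (G.irrefl)
            · exact Finset.mem_singleton_self _
        _ = 1 := Finset.card_singleton _
    · calc (({u, v} : Finset V).filter (G.Adj v)).card ≤ ({u} : Finset V).card := by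
            apply Finset.card_le_card
            intro x hx
            rw [Finset.mem_filter, Finset.mem_insert, Finset.mem_singleton] at hx
            rcases hx.1 with rfl | rfl
            · exact Finset.mem_singleton_self _
            · exact absurd hx.2 (G.irrefl)
        _ = 1 := Finset.card_singleton _
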